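/- If a preordered space (X,≼) is Debreu upper separable, then it has a countable multi-utility. -/
import Mathlib


/-- A Debreu upper separable preorder has a countable multi-utility. -/
theorem debreu_upper_separable_has_countable_multiutility {X : Type*} (le : X → X → Prop)
    (hrefl : ∀ x, le x x) (htrans : ∀ x y z, le x y → le y z → le x z)
    (D : Set X) (hD : D.Countable)
    (hDebreuDense : ∀ x y, le x y → ¬ le y x → ∃ d ∈ D, le x d ∧ le d y)
    (hDebreuUpperDense : ∀ x y, ¬ le x y → ¬ le y x →
      ∃ d ∈ D, (¬ le x d ∧ ¬ le d x) ∧ le d y) :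
    ∃ u : ℕ → X → ℝ, ∀ x y, le x y ↔ ∀ n, u n x ≤ u n y := by
  classical
  rcases D.eq_empty_or_nonempty with hE | hne
  · -- D empty: the relation is trivial (le x y always)
    have hall : ∀ x y, le x y := by
      intro x y
      by_contra hxy
      by_cases hyx : le y x
      · obtain ⟨d, hd, -⟩ := hDebreuDense y x hyx hxy
        simp [hE] at hd
      · obtain ⟨d, hd, -⟩ := hDebreuUpperDense x y hxy hyx
        simp [hE] at hd
    exact ⟨fun _ _ => 0, fun x y => ⟨fun _ _ => le_refl 0, fun _ => hall x y⟩⟩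
  · obtain ⟨f, hf⟩ := hD.exists_eq_range hne
    -- f : ℕ → X with D = range f
    refine ⟨fun n x => if Even n then (if le (f (n / 2)) x then 1 else 0)
      else (if le x (f (n / 2)) then 0 else 1), fun x y => ?_⟩
    constructor
    · intro hxy n
      by_cases he : Even n
      · simp only [he, if_true]
        by_cases h1 : le (f (n / 2)) x
        · simp [h1, htrans _ _ _ h1 hxy]
        · simp only [h1, if_false]; split <;> norm_num
      · simp only [he, if_false]
        by_cases h1 : le y (f (n / 2))
        · simp [h1, htrans _ _ _ hxy h1]
        · simp only [h1, if_false]; split <;> norm_num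
    · intro hu
      by_contra hxy
      by_cases hyx : le y x
      · obtain ⟨d, hd, hyd, hdx⟩ := hDebreuDense y x hyx hxy
        rw [hf] at hd
        obtain ⟨k, rfl⟩ := hd
        have h1 := hu (2 * k)
        have h2 := hu (2 * k + 1)
        have hk1 : (2 * k) / 2 = k := by omega
        have hk2 : (2 * k + 1) / 2 = k := by omega
        simp only [hk1, hk2, even_two_mul k, if_true, Nat.even_add_one,
          not_true, if_false] at h1 h2
        -- h1 : with le (f k) x true, get le (f k) y
        have hdy : le (f k) y := by
          by_contra hc
          simp [hdx, hc] at h1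
          exact absurd h1 (by norm_num)
        have hxd : le x (f k) := by
          by_contra hc
          simp [hyd, hc] at h2
          exact absurd h2 (by norm_num)
        exact hxy (htrans _ _ _ hxd hdy)
      · obtain ⟨d, hd, ⟨hyd, hdy⟩, hdx⟩ := hDebreuUpperDense y x hyx hxy
        rw [hf] at hd
        obtain ⟨k, rfl⟩ := hd
        have h1 := hu (2 * k)
        have hk1 : (2 * k) / 2 = k := by omega
        simp only [hk1, even_two_mul k, if_true] at h1
        simp [hdx, hdy] at h1
        exact absurd h1 (by norm_num)
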